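/- Let ι be a finite index type and for each i ∈ ι let (Ω_i, μ_i) be a σ-finite measure space (each μ_i a probability measure or σ-finite). Let π be a probability density with respect to the product measure ⊗_{i∈ι} μ_i with π·log π integrable, and for each i let π_i be the i-th marginal density (obtained by integrating π over all coordinates other than the i-th), with π_i·log π_i integrable. Then S[π] ≤ ∑_{i∈ι} S[π_i]. -/

import Mathlib

open MeasureTheory Real
open scoped ENNReal NNReal

/-- n-fold subadditivity of the Gibbs entropy: `S[ρ] ≤ ∑ i, S[ρm i]`,
where `ρm i` is the `i`-th marginal density of the joint density `ρ`. -/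
theorem gibbs_entropy_subadditive_finite
    {ι : Type*} [Fintype ι] {Ω : ι → Type*} [∀ i, MeasurableSpace (Ω i)]
    (μ : ∀ i, Measure (Ω i)) [∀ i, SigmaFinite (μ i)]
    (ρ : (∀ i, Ω i) → ℝ) (hρm : Measurable ρ) (hρ0 : ∀ y, 0 ≤ ρ y)
    (hρ1 : ∫ y, ρ y ∂(Measure.pi μ) = 1)
    (hent : Integrable (fun y => ρ y * log (ρ y)) (Measure.pi μ))
    (ρm : ∀ i, Ω i → ℝ) (hρmm : ∀ i, Measurable (ρm i))
    (hmarg : ∀ i, ∀ s : Set (Ω i), MeasurableSet s →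
      ∫ x in s, ρm i x ∂(μ i) = ∫ y in {y : ∀ j, Ω j | y i ∈ s}, ρ y ∂(Measure.pi μ))
    (hentm : ∀ i, Integrable (fun x => ρm i x * log (ρm i x)) (μ i)) :
    -(∫ y, ρ y * log (ρ y) ∂(Measure.pi μ)) ≤
      ∑ i, -(∫ x, ρm i x * log (ρm i x) ∂(μ i)) := by
  classical
  set ν := Measure.pi μ with hν
  have hρint : Integrable ρ ν := by
    by_contra h
    rw [integral_undef h] at hρ1; norm_num at hρ1
  -- marginals integrate to 1
  have hmarg1 : ∀ i, ∫ x, ρm i x ∂(μ i) = 1 := by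
    intro i
    have h := hmarg i Set.univ MeasurableSet.univ
    have : {y : ∀ j, Ω j | y i ∈ (Set.univ : Set (Ω i))} = Set.univ := by
      ext y; simp
    rw [this, Measure.restrict_univ, Measure.restrict_univ] at h
    rw [h, hρ1]
  have hρmint : ∀ i, Integrable (ρm i) (μ i) := by
    intro i
    by_contra h
    have h1 := hmarg1 i
    rw [integral_undef h] at h1; norm_num at h1
  -- marginals are a.e. nonneg
  have hρm0 : ∀ i, 0 ≤ᵐ[μ i] ρm i := by
    intro i
    refine ae_nonneg_of_forall_setIntegral_nonneg (hρmint i) (fun s hs _ => ?_)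
    rw [hmarg i s hs]
    exact setIntegral_nonneg ((measurable_pi_apply i) hs) (fun y _ => hρ0 y)
  -- the probability measure with density ρ
  set P := ν.withDensity (fun y => ENNReal.ofReal (ρ y)) with hP
  have hmap : ∀ i, P.map (fun y => y i)
      = (μ i).withDensity (fun x => ENNReal.ofReal (ρm i x)) := by
    intro i
    ext s hs
    rw [Measure.map_apply (measurable_pi_apply i) hs, hP,
      withDensity_apply _ ((measurable_pi_apply i) hs), withDensity_apply _ hs,
      ← ofReal_integral_eq_lintegral_ofReal hρint.restrict
        (Filter.Eventually.of_forall hρ0),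
      ← ofReal_integral_eq_lintegral_ofReal (hρmint i).restrict
        ((hρm0 i).filter_mono (ae_mono Measure.restrict_le_self))]
    congr 1
    exact (hmarg i s hs).symm
  have hfm : ∀ i, Measurable (fun x => (ρm i x).toNNReal) :=
    fun i => measurable_real_toNNReal.comp (hρmm i)
  have hgm : Measurable (fun y : ∀ j, Ω j => (ρ y).toNNReal) :=
    measurable_real_toNNReal.comp hρm
  have hlogm : ∀ i, Measurable (fun x : Ω i => log (ρm i x)) :=
    fun i => Real.measurable_log.comp (hρmm i)
  -- key transfer: integrability and value of ∫ ρ(y) log (ρm i (y i))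
  have hkey : ∀ i, Integrable (fun y => ρ y * log (ρm i (y i))) ν ∧
      ∫ y, ρ y * log (ρm i (y i)) ∂ν = ∫ x, ρm i x * log (ρm i x) ∂(μ i) := by
    intro i
    have hmeq : (μ i).withDensity (fun x => ENNReal.ofReal (ρm i x))
        = (μ i).withDensity (fun x => ((fun x => (ρm i x).toNNReal) x : ℝ≥0∞)) := rfl
    have hPeq : P = ν.withDensity (fun y => ((fun y => (ρ y).toNNReal) y : ℝ≥0∞)) := rfl
    have haeeq : (fun x => ρm i x * log (ρm i x))
        =ᵐ[μ i] (fun x => (ρm i x).toNNReal • log (ρm i x)) := by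
      filter_upwards [hρm0 i] with x hx
      simp [NNReal.smul_def, Real.coe_toNNReal _ hx]
    have h1 : Integrable (fun x => log (ρm i x))
        ((μ i).withDensity (fun x => ENNReal.ofReal (ρm i x))) := by
      rw [hmeq, integrable_withDensity_iff_integrable_smul (hfm i)]
      exact (hentm i).congr haeeq
    have h2 : Integrable (fun y : ∀ j, Ω j => log (ρm i (y i))) P := by
      rw [← hmap i] at h1
      exact (integrable_map_measure (hlogm i).aestronglyMeasurable
        (measurable_pi_apply i).aemeasurable).1 h1
    have h3 : Integrable (fun y => ρ y * log (ρm i (y i))) ν := by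
      rw [hPeq, integrable_withDensity_iff_integrable_smul hgm] at h2
      refine h2.congr (Filter.Eventually.of_forall fun y => ?_)
      simp [NNReal.smul_def, Real.coe_toNNReal _ (hρ0 y)]
    refine ⟨h3, ?_⟩
    calc ∫ y, ρ y * log (ρm i (y i)) ∂ν
        = ∫ y, (ρ y).toNNReal • log (ρm i (y i)) ∂ν := by
          refine integral_congr_ae (Filter.Eventually.of_forall fun y => ?_)
          simp [NNReal.smul_def, Real.coe_toNNReal _ (hρ0 y)]
      _ = ∫ y, log (ρm i (y i)) ∂P := by
          rw [hPeq, integral_withDensity_eq_integral_smul hgm]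
      _ = ∫ x, log (ρm i x) ∂(P.map (fun y => y i)) := by
          rw [integral_map (measurable_pi_apply i).aemeasurable]
          · exact (hlogm i).aestronglyMeasurable
      _ = ∫ x, (ρm i x).toNNReal • log (ρm i x) ∂(μ i) := by
          rw [hmap i, hmeq, integral_withDensity_eq_integral_smul (hfm i)]
      _ = ∫ x, ρm i x * log (ρm i x) ∂(μ i) := (integral_congr_ae haeeq).symm
  -- where a marginal vanishes, ρ vanishes a.e.
  have hzero : ∀ i, ∀ᵐ y ∂ν, ρm i (y i) = 0 → ρ y = 0 := by
    intro i
    set s : Set (Ω i) := ρm i ⁻¹' {0} with hsdef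
    have hs : MeasurableSet s := (hρmm i) (measurableSet_singleton 0)
    have hA : MeasurableSet {y : ∀ j, Ω j | y i ∈ s} := (measurable_pi_apply i) hs
    have h0 : ∫ x in s, ρm i x ∂(μ i) = 0 := by
      rw [setIntegral_congr_fun hs (fun x hx => hx)]
      simp
    have h1 : ∫ y in {y : ∀ j, Ω j | y i ∈ s}, ρ y ∂ν = 0 := by
      rw [← hmarg i s hs, h0]
    have h2 : ρ =ᵐ[ν.restrict {y : ∀ j, Ω j | y i ∈ s}] 0 :=
      (integral_eq_zero_iff_of_nonneg_ae (Filter.Eventually.of_forall hρ0)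
        hρint.restrict).1 h1
    have h3 := (ae_restrict_iff' hA).1 h2
    filter_upwards [h3] with y hy hyi
    exact hy hyi
  -- marginals are nonneg at a.e. point of the product space
  have hnonnegm : ∀ i, ∀ᵐ y ∂ν, 0 ≤ ρm i (y i) := by
    intro i
    have h := hρm0 i
    rw [Filter.EventuallyLE, ae_iff] at h
    rw [ae_iff]
    exact Measure.pi_eval_preimage_null μ h
  -- product of marginals integrates to 1, and is integrable
  letI : ∀ i, MeasureSpace (Ω i) := fun i => ⟨μ i⟩
  haveI : ∀ i, SigmaFinite (volume : Measure (Ω i)) := fun i =>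
    (inferInstance : SigmaFinite (μ i))
  have hvol : (volume : Measure (∀ i, Ω i)) = ν := by
    rw [hν]; exact volume_pi
  have hσint : Integrable (fun y : ∀ j, Ω j => ∏ i, ρm i (y i)) ν := by
    rw [← hvol]
    exact Integrable.fintype_prod_dep (fun i => hρmint i)
  have hσ1 : ∫ y, ∏ i, ρm i (y i) ∂ν = 1 := by
    rw [← hvol]
    rw [volume_pi, integral_fintype_prod_eq_prod (fun i x => ρm i x)]
    exact Finset.prod_eq_one (fun i _ => hmarg1 i)
  -- the pointwise (a.e.) Gibbs inequality
  have hae : ∀ᵐ y ∂ν, ρ y - ∏ i, ρm i (y i) ≤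
      ρ y * log (ρ y) - ∑ i, ρ y * log (ρm i (y i)) := by
    filter_upwards [ae_all_iff.2 hzero, ae_all_iff.2 hnonnegm] with y hz hn
    rcases eq_or_lt_of_le (hρ0 y) with h0 | h0
    · have hσ0 : 0 ≤ ∏ i, ρm i (y i) := Finset.prod_nonneg (fun i _ => hn i)
      simp only [← h0, zero_mul, Finset.sum_const_zero, sub_zero, zero_sub, sub_zero]
      linarith
    · have hbi : ∀ i, 0 < ρm i (y i) := by
        intro i
        rcases lt_or_eq_of_le (hn i) with h | h
        · exact h
        · exact absurd (hz i h.symm) (ne_of_gt h0)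
      have hσpos : 0 < ∏ i, ρm i (y i) := Finset.prod_pos (fun i _ => hbi i)
      have hls : log (∏ i, ρm i (y i)) = ∑ i, log (ρm i (y i)) :=
        Real.log_prod (fun i _ => (hbi i).ne')
      have hsum : ∑ i, ρ y * log (ρm i (y i)) = ρ y * log (∏ i, ρm i (y i)) := by
        rw [hls, Finset.mul_sum]
      rw [hsum]
      set a := ρ y
      set b := ∏ i, ρm i (y i)
      have hlog : log (b / a) ≤ b / a - 1 :=
        Real.log_le_sub_one_of_pos (div_pos hσpos h0)
      rw [Real.log_div hσpos.ne' h0.ne'] at hlog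
      have := mul_le_mul_of_nonneg_left hlog (le_of_lt h0)
      have hba : a * (b / a - 1) = b - a := by field_simp
      rw [hba] at this
      nlinarith
  -- put everything together
  have hsum_int : Integrable (fun y => ∑ i, ρ y * log (ρm i (y i))) ν :=
    integrable_finset_sum _ (fun i _ => (hkey i).1)
  have hmono : ∫ y, (ρ y - ∏ i, ρm i (y i)) ∂ν ≤
      ∫ y, (ρ y * log (ρ y) - ∑ i, ρ y * log (ρm i (y i))) ∂ν :=
    integral_mono_ae (hρint.sub hσint) (hent.sub hsum_int) hae
  rw [integral_sub hρint hσint, integral_sub hent hsum_int, hρ1, hσ1,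
    integral_finset_sum _ (fun i _ => (hkey i).1)] at hmono
  have hrw : ∑ i, ∫ y, ρ y * log (ρm i (y i)) ∂ν
      = ∑ i, ∫ x, ρm i x * log (ρm i x) ∂(μ i) :=
    Finset.sum_congr rfl (fun i _ => (hkey i).2)
  rw [hrw] at hmono
  rw [Finset.sum_neg_distrib]
  linarith
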